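/- Given a function f : F_q → F_q and an integer k ≥ 0, the following are equivalent: (1) f has codimension at most k; (2) there exist linearised polynomials M, L ∈ F_q[x] such that M has deg(M) distinct roots, all lying in F_q, with deg(M) ≥ p^{n−k}, deg(L) < deg(M), and f(x) = g(M(x)) + L(x) for all x ∈ F_q, where g ∈ F_q[x] has degree at most p^k − 1. -/

import Mathlib

open Polynomial

set_option linter.unusedSectionVars false
set_option linter.unusedVariables false

section Aux
variable {p : ℕ} [Fact p.Prime] {F : Type*} [Field F] [Algebra (ZMod p) F]

def IsLin (p : ℕ) {F : Type*} [Semiring F] (P : F[X]) : Prop :=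
  ∀ i, P.coeff i ≠ 0 → ∃ j, i = p ^ j

theorem zmod_pow_pow (c : ZMod p) (j : ℕ) : c ^ p ^ j = c := ZMod.pow_card_pow c

theorem IsLin.eval_add {P : F[X]} (h : IsLin p P) (x y : F) :
    P.eval (x + y) = P.eval x + P.eval y := by
  haveI : CharP F p := charP_of_injective_algebraMap' (ZMod p) p
  rw [eval_eq_sum, eval_eq_sum, eval_eq_sum, Polynomial.sum, Polynomial.sum, Polynomial.sum,
    ← Finset.sum_add_distrib]
  refine Finset.sum_congr rfl fun i hi => ?_
  obtain ⟨j, rfl⟩ := h i (mem_support_iff.mp hi)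
  rw [add_pow_char_pow, mul_add]

theorem IsLin.eval_smul {P : F[X]} (h : IsLin p P) (c : ZMod p) (x : F) :
    P.eval (c • x) = c • P.eval x := by
  haveI : CharP F p := charP_of_injective_algebraMap' (ZMod p) p
  rw [Algebra.smul_def, Algebra.smul_def, eval_eq_sum, eval_eq_sum, Polynomial.sum,
    Polynomial.sum, Finset.mul_sum]
  refine Finset.sum_congr rfl fun i hi => ?_
  obtain ⟨j, rfl⟩ := h i (mem_support_iff.mp hi)
  rw [mul_pow, ← map_pow, zmod_pow_pow]
  ring

/-- The linear map induced by a linearised polynomial. -/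
noncomputable def IsLin.toLM {P : F[X]} (h : IsLin p P) : F →ₗ[ZMod p] F where
  toFun x := P.eval x
  map_add' := h.eval_add
  map_smul' := h.eval_smul

@[simp] theorem IsLin.toLM_apply {P : F[X]} (h : IsLin p P) (x : F) : h.toLM x = P.eval x := rfl

theorem IsLin.sub' {F : Type*} [Ring F] {P Q : F[X]} (hP : IsLin p P) (hQ : IsLin p Q) :
    IsLin p (P - Q) := by
  intro i hi
  rw [coeff_sub] at hi
  rcases ne_or_eq (P.coeff i) 0 with h | h
  · exact hP i h
  · exact hQ i fun h0 => hi (by rw [h, h0, sub_zero])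

theorem IsLin.C_mul' {F : Type*} [Semiring F] {P : F[X]} (hP : IsLin p P) (c : F) :
    IsLin p (C c * P) := by
  intro i hi
  rw [coeff_C_mul] at hi
  exact hP i fun h0 => hi (by rw [h0, mul_zero])

theorem isLin_X {F : Type*} [Semiring F] [Nontrivial F] : IsLin p (X : F[X]) := by
  intro i hi
  rw [coeff_X] at hi
  exact ⟨0, by simp only [pow_zero]; by_contra h; exact hi (if_neg (Ne.symm h))⟩

theorem IsLin.pow_p {P : F[X]} (hP : IsLin p P) : IsLin p (P ^ p) := by
  haveI : CharP F p := charP_of_injective_algebraMap' (ZMod p) p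
  intro i hi
  rw [← Polynomial.map_frobenius_expand (p := p) P] at hi
  rw [Polynomial.coeff_map] at hi
  have hdvd : p ∣ i := by
    by_contra hnd
    rw [Polynomial.coeff_expand (Fact.out : p.Prime).pos, if_neg hnd] at hi
    simp at hi
  have hc : P.coeff (i / p) ≠ 0 := by
    intro h0
    rw [Polynomial.coeff_expand (Fact.out : p.Prime).pos, if_pos hdvd, h0] at hi
    simp at hi
  obtain ⟨j, hj⟩ := hP (i / p) hc
  exact ⟨j + 1, by rw [pow_succ, ← hj, Nat.div_mul_cancel hdvd]⟩

end Aux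
section Aux2
variable {p : ℕ} [Fact p.Prime] {F : Type*} [Field F] [DecidableEq F] [Algebra (ZMod p) F]

theorem IsLin.comp_X_sub_C {P : F[X]} (h : IsLin p P) (a : F) :
    P.comp (X - C a) = P - C (P.eval a) := by
  haveI : CharP F p := charP_of_injective_algebraMap' (ZMod p) p
  conv_lhs => rw [P.as_sum_support]
  rw [show (∑ i ∈ P.support, monomial i (P.coeff i)).comp (X - C a)
      = ∑ i ∈ P.support, (monomial i (P.coeff i)).comp (X - C a) from by
    simp [Polynomial.comp, Polynomial.eval₂_finset_sum]]
  have key : ∀ i ∈ P.support, (monomial i (P.coeff i)).comp (X - C a)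
      = monomial i (P.coeff i) - C (P.coeff i * a ^ i) := by
    intro i hi
    obtain ⟨j, rfl⟩ := h i (mem_support_iff.mp hi)
    rw [← C_mul_X_pow_eq_monomial, mul_comp, pow_comp, X_comp, C_comp,
      sub_pow_char_pow, mul_sub, ← C_pow, ← C_mul, C_mul_X_pow_eq_monomial]
  rw [Finset.sum_congr rfl key, Finset.sum_sub_distrib, ← P.as_sum_support, ← map_sum C]
  congr 1
  rw [eval_eq_sum, Polynomial.sum_def]

theorem prod_zmod_smul (b : F) :
    ∏ c : ZMod p, (X - C (c • b)) = X ^ p - C (b ^ (p - 1)) * X := by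
  haveI : CharP F p := charP_of_injective_algebraMap' (ZMod p) p
  have hp2 : 2 ≤ p := (Fact.out : p.Prime).two_le
  rcases eq_or_ne b 0 with rfl | hb
  · simp only [smul_zero, C_0, sub_zero, Finset.prod_const, Finset.card_univ, ZMod.card]
    rw [zero_pow (by omega : p - 1 ≠ 0), C_0, zero_mul, sub_zero]
  · set Q : F[X] := X ^ p - C (b ^ (p - 1)) * X with hQ
    have hdC : ((C (b ^ (p - 1)) * X : F[X])).degree < (p : WithBot ℕ) := by
      apply lt_of_le_of_lt (degree_mul_le _ _)
      rw [degree_C (by exact pow_ne_zero _ hb), degree_X, zero_add]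
      exact_mod_cast Nat.one_lt_cast.mpr (by omega)
    have hmon : Q.Monic := monic_X_pow_sub hdC
    have hdeg : Q.natDegree = p := by
      have hlt : (C (b ^ (p - 1)) * X).natDegree < (X ^ p : F[X]).natDegree := by
        rw [natDegree_X_pow]
        calc (C (b ^ (p - 1)) * X).natDegree ≤ (X : F[X]).natDegree := natDegree_C_mul_le _ _
          _ = 1 := natDegree_X
          _ < p := by omega
      rw [hQ, natDegree_sub_eq_left_of_natDegree_lt hlt, natDegree_X_pow]
    have hQ0 : Q ≠ 0 := hmon.ne_zero
    have hinj : Function.Injective (fun c : ZMod p => c • b) := smul_left_injective (ZMod p) hb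
    set s : Finset F := Finset.univ.image (fun c : ZMod p => c • b) with hs
    have hcard : s.card = p := by
      rw [hs, Finset.card_image_of_injective _ hinj, Finset.card_univ, ZMod.card]
    have hroot : ∀ a ∈ s, Q.IsRoot a := by
      intro a ha
      rw [hs] at ha
      obtain ⟨c, _, rfl⟩ := Finset.mem_image.mp ha
      have hcp : (c • b) ^ p = c • b ^ p := by
        rw [Algebra.smul_def, Algebra.smul_def, mul_pow, ← map_pow, ZMod.pow_card]
      simp only [IsRoot, eval_sub, eval_pow, eval_mul, eval_C, eval_X, hQ]
      rw [hcp, Algebra.smul_def, Algebra.smul_def,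
        show b ^ (p - 1) * (algebraMap (ZMod p) F c * b)
          = algebraMap (ZMod p) F c * (b ^ (p - 1) * b) from by ring,
        show b ^ (p - 1) * b = b ^ p from by rw [← pow_succ]; congr 1; omega]
      ring
    have hle : s.val ≤ Q.roots := by
      rw [Multiset.le_iff_count]
      intro a
      by_cases ha : a ∈ s
      · rw [Multiset.count_eq_one_of_mem s.nodup ha, Polynomial.count_roots]
        exact (Polynomial.rootMultiplicity_pos hQ0).mpr (hroot a ha)
      · rw [Multiset.count_eq_zero_of_notMem (by simpa using ha)]
        omega
    have heq : Q.roots = s.val := by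
      refine (Multiset.eq_of_le_of_card_le hle ?_).symm
      calc Multiset.card Q.roots ≤ Q.natDegree := Q.card_roots'
        _ = p := hdeg
        _ = Multiset.card s.val := by rw [← hcard]; rfl
    have hprod := prod_multiset_X_sub_C_of_monic_of_roots_card_eq hmon
      (by rw [heq, hdeg]; exact (by rw [← hcard]; rfl : Multiset.card s.val = p))
    rw [heq] at hprod
    calc ∏ c : ZMod p, (X - C (c • b)) = ∏ a ∈ s, (X - C a) := by
          rw [hs, Finset.prod_image (fun x _ y _ h => hinj h)]
      _ = (s.val.map fun a => X - C a).prod := by rw [Finset.prod_eq_multiset_prod]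
      _ = Q := hprod

end Aux2

section Aux3
variable {p : ℕ} [Fact p.Prime] {F : Type*} [Field F] [DecidableEq F] [Algebra (ZMod p) F]

/-- The subspace polynomial of a subspace. -/
noncomputable def spoly [Finite F] (U : Submodule (ZMod p) F) : F[X] :=
  ∏ a ∈ (Set.toFinite (U : Set F)).toFinset, (X - C a)

theorem spoly_eq_prod [Finite F] (U : Submodule (ZMod p) F) (instU : Fintype ↥U) :
    spoly U = ∏ u : ↥U, (X - C (u : F)) := by
  rw [spoly]
  exact Finset.prod_subtype _ (fun x => by simp [Set.Finite.mem_toFinset]) _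

theorem isLin_spoly [Finite F] (d : ℕ) (U : Submodule (ZMod p) F)
    (hd : Module.finrank (ZMod p) ↥U = d) : IsLin p (spoly U) := by
  induction d generalizing U with
  | zero =>
    have hbot : U = ⊥ := Submodule.finrank_eq_zero.mp hd
    subst hbot
    rw [spoly]
    rw [show (Set.toFinite ((⊥ : Submodule (ZMod p) F) : Set F)).toFinset = {0} from by
      ext a
      simp [Set.Finite.mem_toFinset]]
    rw [Finset.prod_singleton, C_0, sub_zero]
    exact isLin_X
  | succ d ih =>
    -- pick a nonzero element of U
    have hUne : U ≠ ⊥ := by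
      intro h
      rw [h, finrank_bot (ZMod p) F] at hd
      omega
    obtain ⟨β, hβU, hβ0⟩ := Submodule.exists_mem_ne_zero_of_ne_bot hUne
    set βU : ↥U := ⟨β, hβU⟩ with hβU'
    have hβU0 : βU ≠ 0 := fun h => hβ0 (by simpa [hβU'] using congrArg Subtype.val h)
    obtain ⟨W, hW⟩ := Submodule.exists_isCompl ((ZMod p) ∙ βU)
    have hrkS : Module.finrank (ZMod p) ↥((ZMod p) ∙ βU) = 1 := finrank_span_singleton hβU0
    have hrkW : Module.finrank (ZMod p) ↥W = d := by
      have h2 := Submodule.finrank_add_eq_of_isCompl hW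
      rw [hrkS, hd] at h2
      omega
    set U' : Submodule (ZMod p) F := W.map U.subtype with hU'
    set e3 : ↥W ≃ₗ[ZMod p] ↥U' := Submodule.equivMapOfInjective U.subtype U.injective_subtype W
      with he3
    have hrkU' : Module.finrank (ZMod p) ↥U' = d := by rw [← e3.finrank_eq]; exact hrkW
    have hM' := ih U' hrkU'
    set M' : F[X] := spoly U' with hM'def
    haveI instU : Fintype ↥U := Fintype.ofFinite _
    haveI instU' : Fintype ↥U' := Fintype.ofFinite _
    obtain ⟨E, hEcoe⟩ : ∃ E : (ZMod p × ↥U') ≃ ↥U,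
        ∀ (c : ZMod p) (u' : ↥U'), ((E (c, u') : ↥U) : F) = c • β + (u' : F) := by
      refine ⟨(((LinearEquiv.toSpanNonzeroSingleton (ZMod p) ↥U βU hβU0).prodCongr e3.symm).trans
        (Submodule.prodEquivOfIsCompl _ W hW)).toEquiv, fun c u' => ?_⟩
      have h1 : (((LinearEquiv.toSpanNonzeroSingleton (ZMod p) ↥U βU hβU0).prodCongr e3.symm).trans
          (Submodule.prodEquivOfIsCompl _ W hW)).toEquiv (c, u')
          = ((LinearEquiv.toSpanNonzeroSingleton (ZMod p) ↥U βU hβU0 c : ↥U)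
            + (e3.symm u' : ↥U) : ↥U) := rfl
      rw [h1, Submodule.coe_add]
      congr 1
      case e_a =>
        have h2 := Submodule.coe_equivMapOfInjective_apply U.subtype U.injective_subtype W
          (e3.symm u')
        rw [← he3, LinearEquiv.apply_symm_apply] at h2
        exact h2.symm

    -- decompose the product
    have hprod : spoly U = ∏ c : ZMod p, ∏ u' : ↥U', (X - C (c • β + (u' : F))) := by
      rw [spoly_eq_prod U instU, ← Equiv.prod_comp E (fun u : ↥U => (X - C (u : F))),
        Fintype.prod_prod_type]
      exact Finset.prod_congr rfl fun c _ => Finset.prod_congr rfl fun u' _ => by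
        rw [hEcoe]
    have hinner : ∀ c : ZMod p, (∏ u' : ↥U', (X - C (c • β + (u' : F))))
        = M' - C (c • M'.eval β) := by
      intro c
      have h3 : ∀ u' : ↥U', (X - C (c • β + (u' : F)))
          = (X - C ((u' : F))).comp (X - C (c • β)) := by
        intro u'
        rw [sub_comp, X_comp, C_comp, C_add, sub_sub]
      rw [Finset.prod_congr rfl fun u' _ => h3 u', ← Polynomial.prod_comp,
        ← spoly_eq_prod U' instU', ← hM'def, hM'.comp_X_sub_C, hM'.eval_smul]
    rw [hprod, Finset.prod_congr rfl fun c _ => hinner c]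
    have hfinal : ∏ c : ZMod p, (M' - C (c • M'.eval β))
        = M' ^ p - C ((M'.eval β) ^ (p - 1)) * M' := by
      have h4 := congrArg (fun q : F[X] => q.comp M') (prod_zmod_smul (p := p) (M'.eval β))
      simpa only [Polynomial.prod_comp, sub_comp, X_comp, C_comp, pow_comp, mul_comp] using h4
    rw [hfinal]
    exact (hM'.pow_p).sub' (hM'.C_mul' _)

end Aux3

section Aux4
variable {p : ℕ} [Fact p.Prime] {F : Type*} [Field F] [DecidableEq F] [Algebra (ZMod p) F]
  [Fintype F]

theorem spoly_monic (U : Submodule (ZMod p) F) : (spoly U).Monic :=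
  monic_prod_of_monic _ _ fun a _ => monic_X_sub_C a

theorem spoly_natDegree' (U : Submodule (ZMod p) F) :
    (spoly U).natDegree = ((Set.toFinite (U : Set F)).toFinset).card := by
  rw [spoly, Polynomial.natDegree_prod _ _ (fun a _ => X_sub_C_ne_zero a)]
  simp [natDegree_X_sub_C]

theorem spoly_natDegree (U : Submodule (ZMod p) F) (instU : Fintype ↥U) :
    (spoly U).natDegree = Fintype.card ↥U := by
  rw [spoly_eq_prod U instU, Polynomial.natDegree_prod _ _ (fun a _ => X_sub_C_ne_zero _)]
  simp [natDegree_X_sub_C]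

theorem spoly_roots (U : Submodule (ZMod p) F) :
    (spoly U).roots = ((Set.toFinite (U : Set F)).toFinset).val := by
  rw [spoly]; exact roots_prod_X_sub_C _

theorem spoly_roots_card (U : Submodule (ZMod p) F) :
    (spoly U).roots.toFinset.card = (spoly U).natDegree := by
  rw [spoly_roots, Finset.val_toFinset, ← spoly_natDegree']

theorem spoly_eval_eq_zero_iff (U : Submodule (ZMod p) F) (x : F) :
    (spoly U).eval x = 0 ↔ x ∈ U := by
  rw [spoly, eval_prod]
  rw [Finset.prod_eq_zero_iff]
  constructor
  · rintro ⟨a, ha, h0⟩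
    rw [eval_sub, eval_X, eval_C, sub_eq_zero] at h0
    subst h0
    exact (Set.Finite.mem_toFinset _).mp ha
  · intro hx
    exact ⟨x, (Set.Finite.mem_toFinset _).mpr hx, by simp⟩

/-- smul-pow fact. -/
theorem smul_pow_ppow (c : ZMod p) (x : F) (j : ℕ) : (c • x) ^ p ^ j = c • x ^ p ^ j := by
  rw [Algebra.smul_def, Algebra.smul_def, mul_pow, ← map_pow, zmod_pow_pow]

/-- There is a linearised polynomial of degree `< p ^ m` agreeing with any given linear map
on a subspace of dimension `m`. -/
theorem exists_lin_poly_matching (U : Submodule (ZMod p) F) (m : ℕ)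
    (hm : Module.finrank (ZMod p) ↥U = m) (L : F →ₗ[ZMod p] F) :
    ∃ R : F[X], IsLin p R ∧ R.degree < (p ^ m : ℕ) ∧ ∀ u ∈ U, R.eval u = L u := by
  haveI : CharP F p := charP_of_injective_algebraMap' (ZMod p) p
  haveI instU : Fintype ↥U := Fintype.ofFinite _
  have hp2 : 2 ≤ p := (Fact.out : p.Prime).two_le
  -- the evaluation linear map
  set Φ : (Fin m → F) →ₗ[ZMod p] (↥U →ₗ[ZMod p] F) :=
    { toFun := fun a =>
        { toFun := fun u => ∑ j : Fin m, a j * (u : F) ^ p ^ (j : ℕ)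
          map_add' := fun u v => by
            simp only [Submodule.coe_add]
            rw [← Finset.sum_add_distrib]
            exact Finset.sum_congr rfl fun j _ => by rw [add_pow_char_pow, mul_add]
          map_smul' := fun c u => by
            simp only [SetLike.val_smul, RingHom.id_apply]
            rw [Finset.smul_sum]
            exact Finset.sum_congr rfl fun j _ => by
              rw [smul_pow_ppow, mul_smul_comm] }
      map_add' := fun a b => by
        refine LinearMap.ext fun u => ?_
        simp only [Pi.add_apply, LinearMap.coe_mk, AddHom.coe_mk, LinearMap.add_apply]
        rw [← Finset.sum_add_distrib]
        exact Finset.sum_congr rfl fun j _ => by rw [add_mul]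
      map_smul' := fun c a => by
        refine LinearMap.ext fun u => ?_
        simp only [Pi.smul_apply, LinearMap.coe_mk, AddHom.coe_mk, RingHom.id_apply,
          LinearMap.smul_apply]
        rw [Finset.smul_sum]
        exact Finset.sum_congr rfl fun j _ => by rw [smul_mul_assoc] } with hΦ
  have hinj : Function.Injective Φ := by
    rw [injective_iff_map_eq_zero]
    intro a ha
    set P : F[X] := ∑ j : Fin m, C (a j) * X ^ p ^ (j : ℕ) with hP
    have hPdeg : P.natDegree < p ^ m := by
      apply lt_of_le_of_lt (natDegree_sum_le _ _)
      rw [Finset.fold_max_lt]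
      constructor
      · exact pow_pos (by omega) m
      · intro j _
        apply lt_of_le_of_lt (natDegree_C_mul_le _ _)
        rw [natDegree_X_pow]
        exact Nat.pow_lt_pow_right (by omega) j.isLt
    have hPz : P = 0 := by
      apply eq_zero_of_natDegree_lt_card_of_eval_eq_zero' P
        (Finset.univ.image ((↑) : ↥U → F))
      · intro i hi
        obtain ⟨u, _, rfl⟩ := Finset.mem_image.mp hi
        have := congrArg (fun L : ↥U →ₗ[ZMod p] F => L u) ha
        simp only [LinearMap.zero_apply] at this
        rw [hP]
        rw [eval_finset_sum]
        simpa [hΦ] using this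
      · rw [Finset.card_image_of_injective _ Subtype.val_injective, Finset.card_univ]
        calc P.natDegree < p ^ m := hPdeg
          _ = Fintype.card ↥U := by
            rw [Module.card_eq_pow_finrank (K := ZMod p) (V := ↥U), ZMod.card, hm]
    funext j
    have := congrArg (fun Q : F[X] => Q.coeff (p ^ (j : ℕ))) hPz
    simp only [hP, finset_sum_coeff, coeff_C_mul, coeff_X_pow, coeff_zero] at this
    rw [Finset.sum_eq_single j] at this
    · simpa using this
    · intro k _ hkj
      have : ¬ (p ^ (j:ℕ) = p ^ (k:ℕ)) := fun h => hkj (Fin.ext (Nat.pow_right_injective hp2 h.symm))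
      simp only [if_neg this, mul_zero]
    · simp
  have hsurj : Function.Surjective Φ := by
    haveI : FiniteDimensional (ZMod p) (Fin m → F) := by infer_instance
    apply (LinearMap.injective_iff_surjective_of_finrank_eq_finrank ?_).mp hinj
    rw [Module.finrank_linearMap, hm, Module.finrank_pi_fintype, Finset.sum_const,
      Finset.card_univ, Fintype.card_fin, smul_eq_mul]
  obtain ⟨a, ha⟩ := hsurj (L.domRestrict U)
  refine ⟨∑ j : Fin m, C (a j) * X ^ p ^ (j : ℕ), ?_, ?_, ?_⟩
  · intro i hi
    rw [finset_sum_coeff] at hi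
    obtain ⟨j, _, hj⟩ := Finset.exists_ne_zero_of_sum_ne_zero hi
    rw [coeff_C_mul, coeff_X_pow] at hj
    refine ⟨(j : ℕ), ?_⟩
    by_contra h
    rw [if_neg h, mul_zero] at hj
    exact hj rfl
  · apply lt_of_le_of_lt (degree_sum_le _ _)
    rw [Finset.sup_lt_iff (by exact_mod_cast WithBot.bot_lt_coe (p ^ m))]
    intro j _
    calc (C (a j) * X ^ p ^ (j : ℕ)).degree ≤ ((p ^ (j : ℕ) : ℕ) : WithBot ℕ) := by
          apply le_trans (degree_mul_le _ _)
          rw [degree_X_pow]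
          apply le_trans (add_le_add_left degree_C_le _)
          simp
      _ < ((p ^ m : ℕ) : WithBot ℕ) := by
          exact_mod_cast Nat.pow_lt_pow_right (by omega) j.isLt
  · intro u hu
    have := congrArg (fun L : ↥U →ₗ[ZMod p] F => L ⟨u, hu⟩) ha
    simp only [hΦ, LinearMap.coe_mk, AddHom.coe_mk, LinearMap.domRestrict_apply] at this
    rw [eval_finset_sum]
    simpa using this

end Aux4

section Aux5
variable {p : ℕ} [Fact p.Prime] {F : Type*} [Field F] [DecidableEq F] [Algebra (ZMod p) F]
  [Fintype F]

theorem exists_submodule_finrank_eq (U₀ : Submodule (ZMod p) F) (r : ℕ)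
    (hr : r ≤ Module.finrank (ZMod p) ↥U₀) :
    ∃ U : Submodule (ZMod p) F, U ≤ U₀ ∧ Module.finrank (ZMod p) ↥U = r := by
  haveI : FiniteDimensional (ZMod p) ↥U₀ := Module.Finite.of_finite
  set b := Module.finBasis (ZMod p) ↥U₀ with hb
  set v : Fin r → F := fun i => ((b (Fin.castLE hr i) : ↥U₀) : F) with hv
  have hli : LinearIndependent (ZMod p) v := by
    have h1 : LinearIndependent (ZMod p) (fun i : Fin r => b (Fin.castLE hr i)) :=
      b.linearIndependent.comp _ (Fin.castLE_injective hr)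
    exact h1.map' U₀.subtype (Submodule.ker_subtype U₀)
  refine ⟨Submodule.span (ZMod p) (Set.range v), ?_, ?_⟩
  · rw [Submodule.span_le]
    rintro x ⟨i, rfl⟩
    exact (b (Fin.castLE hr i)).2
  · rw [finrank_span_eq_card hli, Fintype.card_fin]

end Aux5

/-- A function `f : 𝔽_q → 𝔽_q` (with `q = p^n`) has codimension at most `k` if there are an
`𝔽_p`-linear map `L : 𝔽_q → 𝔽_q`, an `𝔽_p`-subspace `U` of dimension `n - k`, and a constant
`a_V` for each coset `V` of `U`, such that `f(x) = L(x) + a_{U+x}` for all `x`. -/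
def HasCodimAtMost (p n : ℕ) {F : Type*} [Field F] [Fintype F] [Algebra (ZMod p) F]
    (f : F → F) (k : ℕ) : Prop :=
  ∃ (L : F →ₗ[ZMod p] F) (U : Submodule (ZMod p) F) (a : F ⧸ U → F),
    Module.finrank (ZMod p) ↥U = n - k ∧
    ∀ x : F, f x = L x + a (Submodule.Quotient.mk x)

/-- `f` has codimension at most `k` iff there exist linearised polynomials
`M, L ∈ 𝔽_q[x]` such that `M` has `deg M` distinct roots, all lying in `𝔽_q`, with
`deg M ≥ p^(n-k)`, `deg L < deg M`, and `f(x) = g(M(x)) + L(x)` for all `x ∈ 𝔽_q`, where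
`g ∈ 𝔽_q[x]` has degree at most `p^k - 1`. -/
theorem stmt2 (p n : ℕ) [Fact p.Prime] (hn : 1 ≤ n) {F : Type*} [Field F] [Fintype F]
    [Algebra (ZMod p) F] [DecidableEq F] (hcard : Fintype.card F = p ^ n)
    (f : F → F) (k : ℕ) :
    HasCodimAtMost p n f k ↔
      ∃ M L g : F[X],
        (∀ i : ℕ, M.coeff i ≠ 0 → ∃ j : ℕ, i = p ^ j) ∧
        (∀ i : ℕ, L.coeff i ≠ 0 → ∃ j : ℕ, i = p ^ j) ∧
        M.roots.toFinset.card = M.natDegree ∧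
        p ^ (n - k) ≤ M.natDegree ∧
        L.degree < M.degree ∧
        g.natDegree ≤ p ^ k - 1 ∧
        ∀ x : F, f x = g.eval (M.eval x) + L.eval x := by
  
  haveI : CharP F p := charP_of_injective_algebraMap' (ZMod p) p
  have hp2 : 2 ≤ p := (Fact.out : p.Prime).two_le
  have hfr : Module.finrank (ZMod p) F = n := by
    have h1 : Fintype.card F = p ^ Module.finrank (ZMod p) F := by
      rw [Module.card_eq_pow_finrank (K := ZMod p) (V := F), ZMod.card]
    rw [hcard] at h1
    exact (Nat.pow_right_injective hp2 h1).symm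
  constructor
  · -- forward direction
    rintro ⟨L, U, a, hU, heq⟩
    haveI instU : Fintype ↥U := Fintype.ofFinite _
    set M : F[X] := spoly U with hMdef
    have hMlin : IsLin p M := isLin_spoly (n - k) U hU
    have hcardU : Fintype.card ↥U = p ^ (n - k) := by
      rw [Module.card_eq_pow_finrank (K := ZMod p) (V := ↥U), ZMod.card, hU]
    have hMdeg : M.natDegree = p ^ (n - k) := by rw [hMdef, spoly_natDegree U instU, hcardU]
    have hM0 : M ≠ 0 := (spoly_monic U).ne_zero
    have hMdegree : M.degree = ((p ^ (n - k) : ℕ) : WithBot ℕ) := by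
      rw [degree_eq_natDegree hM0, hMdeg]
    -- the linearised remainder
    obtain ⟨R, hRlin, hRdeg, hRmatch⟩ := exists_lin_poly_matching U (n - k) hU L
    -- M is constant on cosets
    have hMcoset : ∀ x y : F, (Submodule.Quotient.mk x : F ⧸ U) = Submodule.Quotient.mk y →
        M.eval x = M.eval y := by
      intro x y hxy
      have hd : x - y ∈ U := (Submodule.Quotient.eq U).mp hxy
      have h1 : M.eval x = M.eval (y + (x - y)) := by ring_nf
      rw [h1, hMlin.eval_add, (spoly_eval_eq_zero_iff U _).mpr hd, add_zero]
    have hMfiber : ∀ x y : F, M.eval x = M.eval y →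
        (Submodule.Quotient.mk x : F ⧸ U) = Submodule.Quotient.mk y := by
      intro x y hxy
      rw [Submodule.Quotient.eq]
      rw [← spoly_eval_eq_zero_iff U]
      have h1 : M.eval (x - y) = M.eval x - M.eval y := by
        have := hMlin.eval_add (x - y) y
        simp only [sub_add_cancel] at this
        rw [this]; ring
      rw [h1, hxy, sub_self]
    -- the function f - R is constant on cosets
    have hconst : ∀ x y : F, (Submodule.Quotient.mk x : F ⧸ U) = Submodule.Quotient.mk y →
        f x - R.eval x = f y - R.eval y := by
      intro x y hxy
      have hd : x - y ∈ U := (Submodule.Quotient.eq U).mp hxy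
      have hR1 : R.eval x = R.eval y + R.eval (x - y) := by
        have := hRlin.eval_add (x - y) y
        simp only [sub_add_cancel] at this
        rw [this]; ring
      rw [heq x, heq y, hxy, hR1, hRmatch _ hd]
      have hL1 : L x = L y + L (x - y) := by
        have := L.map_add (x - y) y
        simp only [sub_add_cancel] at this
        rw [this]; ring
      rw [hL1]; ring
    -- interpolation
    set T : Finset F := Finset.image (fun x : F => M.eval x) Finset.univ with hT
    have hTinj : Set.InjOn id (T : Set F) := fun a _ b _ h => h
    set pick : F → F := fun t => Function.invFun (fun x : F => M.eval x) t with hpick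
    have hpick_spec : ∀ t ∈ T, M.eval (pick t) = t := by
      intro t ht
      obtain ⟨x, _, rfl⟩ := Finset.mem_image.mp ht
      show (fun y : F => M.eval y) (Function.invFun (fun y : F => M.eval y) (M.eval x)) = M.eval x
      exact Function.invFun_eq (f := fun y : F => M.eval y) ⟨x, rfl⟩
    set g : F[X] := Lagrange.interpolate T id (fun t => f (pick t) - R.eval (pick t)) with hg
    -- cardinality of T
    haveI instQ : Fintype (F ⧸ U) := Fintype.ofFinite _
    have hQcard : Fintype.card (F ⧸ U) ≤ p ^ k := by
      have h1 : Fintype.card (F ⧸ U) = p ^ Module.finrank (ZMod p) (F ⧸ U) := by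
        rw [Module.card_eq_pow_finrank (K := ZMod p) (V := F ⧸ U), ZMod.card]
      have h2 : Module.finrank (ZMod p) (F ⧸ U) + Module.finrank (ZMod p) ↥U
          = Module.finrank (ZMod p) F := by
        haveI : FiniteDimensional (ZMod p) F := Module.Finite.of_finite
        exact Submodule.finrank_quotient_add_finrank U
      rw [h1]
      apply Nat.pow_le_pow_right (by omega)
      omega
    have hTcard : T.card ≤ p ^ k := by
      have hsub : T ⊆ Finset.image (fun v : F ⧸ U => M.eval (Quotient.out v)) Finset.univ := by
        intro t ht
        obtain ⟨x, _, rfl⟩ := Finset.mem_image.mp ht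
        refine Finset.mem_image.mpr ⟨Submodule.Quotient.mk x, Finset.mem_univ _, ?_⟩
        apply hMcoset
        exact Quotient.out_eq _
      calc T.card ≤ (Finset.image (fun v : F ⧸ U => M.eval (Quotient.out v)) Finset.univ).card :=
            Finset.card_le_card hsub
        _ ≤ Fintype.card (F ⧸ U) := by
            apply le_trans (Finset.card_image_le) (le_of_eq (Finset.card_univ))
        _ ≤ p ^ k := hQcard
    refine ⟨M, R, g, hMlin, hRlin, ?_, ?_, ?_, ?_, ?_⟩
    · rw [hMdef]; exact spoly_roots_card U
    · rw [hMdeg]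
    · rw [hMdegree]; exact lt_of_lt_of_le hRdeg (le_refl _)
    · -- degree of g
      rcases eq_or_ne g 0 with h0 | h0
      · rw [h0, natDegree_zero]; omega
      · have h1 : g.degree < T.card := Lagrange.degree_interpolate_lt _ hTinj
        have h2 : g.natDegree < T.card := by
          rwa [degree_eq_natDegree h0, Nat.cast_lt] at h1
        have hT1 : 1 ≤ p ^ k := Nat.one_le_pow _ _ (by omega)
        omega
    · intro x
      have hxT : M.eval x ∈ T := Finset.mem_image.mpr ⟨x, Finset.mem_univ _, rfl⟩
      have h1 : g.eval (M.eval x) = f (pick (M.eval x)) - R.eval (pick (M.eval x)) := by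
        rw [hg]
        exact Lagrange.eval_interpolate_at_node _ hTinj hxT
      have h2 : f (pick (M.eval x)) - R.eval (pick (M.eval x)) = f x - R.eval x := by
        apply hconst
        apply hMfiber
        rw [hpick_spec _ hxT]
      rw [h1, h2]; ring
  · -- reverse direction
    rintro ⟨M, L, g, hMlin, hLlin, hroots, hdegM, hdegL, hdegg, heq⟩
    have hIsLinM : IsLin p M := hMlin
    have hIsLinL : IsLin p L := hLlin
    set U₀ : Submodule (ZMod p) F := LinearMap.ker hIsLinM.toLM with hU₀
    have hU₀mem : ∀ x : F, x ∈ U₀ ↔ M.eval x = 0 := by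
      intro x
      rw [hU₀, LinearMap.mem_ker, IsLin.toLM_apply]
    haveI instU₀ : Fintype ↥U₀ := Fintype.ofFinite _
    -- roots lie in the kernel
    have hsub : M.roots.toFinset ⊆ (Set.toFinite (U₀ : Set F)).toFinset := by
      intro x hx
      rw [Multiset.mem_toFinset, mem_roots'] at hx
      rw [Set.Finite.mem_toFinset]
      exact (hU₀mem x).mpr hx.2
    have hcard₀ : p ^ (n - k) ≤ Fintype.card ↥U₀ := by
      calc p ^ (n - k) ≤ M.natDegree := hdegM
        _ = M.roots.toFinset.card := hroots.symm
        _ ≤ ((Set.toFinite (U₀ : Set F)).toFinset).card := Finset.card_le_card hsub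
        _ = Fintype.card ↥U₀ := by
            rw [Set.Finite.card_toFinset]
            rfl
    have hrank₀ : n - k ≤ Module.finrank (ZMod p) ↥U₀ := by
      have h1 : Fintype.card ↥U₀ = p ^ Module.finrank (ZMod p) ↥U₀ := by
        rw [Module.card_eq_pow_finrank (K := ZMod p) (V := ↥U₀), ZMod.card]
      rw [h1] at hcard₀
      exact (Nat.pow_le_pow_iff_right (by omega)).mp hcard₀
    obtain ⟨U, hUle, hUrank⟩ := exists_submodule_finrank_eq U₀ (n - k) hrank₀
    refine ⟨hIsLinL.toLM, U, fun v => g.eval (M.eval (Quotient.out v)), hUrank, ?_⟩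
    intro x
    have hout : (Submodule.Quotient.mk (Quotient.out (Submodule.Quotient.mk x : F ⧸ U))
        : F ⧸ U) = Submodule.Quotient.mk x := Quotient.out_eq _
    have hmem : Quotient.out (Submodule.Quotient.mk x : F ⧸ U) - x ∈ U₀ :=
      hUle ((Submodule.Quotient.eq U).mp hout)
    have hMeq : M.eval (Quotient.out (Submodule.Quotient.mk x : F ⧸ U)) = M.eval x := by
      set y := Quotient.out (Submodule.Quotient.mk x : F ⧸ U) with hy
      have h1 : M.eval y = M.eval (x + (y - x)) := by ring_nf
      rw [h1, hIsLinM.eval_add, (hU₀mem _).mp hmem, add_zero]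
    rw [heq x]
    show eval (eval x M) g + eval x L
      = hIsLinL.toLM x + g.eval (M.eval (Quotient.out (Submodule.Quotient.mk x : F ⧸ U)))
    rw [IsLin.toLM_apply, hMeq]
    ring
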